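/- arXiv:1604.03927 — 2 statements merged into one kernel-verified Lean document; each statement's English description precedes it below -/
import Mathlib

section
/- Let V be a finite-dimensional real vector space with a nondegenerate quadratic form Q of signature (p,q), p ≥ 1, q ≥ 1, with associated symmetric bilinear form B. Let x, y ∈ V satisfy Q(x) < 0 and Q(y) < 0. Suppose that every p-dimensional subspace W ⊆ V on which Q is positive definite and which satisfies W ⊆ x^⊥ (i.e., B(w,x) = 0 for all w ∈ W) also satisfies W ⊆ y^⊥. Then y is a scalar multiple of x. (Equivalently: the set S_x of positive p-planes orthogonal to a negative vector x determines x up to proportionality.) -/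
open QuadraticMap

private lemma quad_sum_orth {V : Type*} [AddCommGroup V] [Module ℝ V] (Q : QuadraticForm ℝ V)
    {ι : Type*} [DecidableEq ι] (s : Finset ι) (g : ι → V)
    (horth : ∀ i j, i ≠ j → polar Q (g i) (g j) = 0) (a : ι → ℝ) :
    Q (∑ i ∈ s, a i • g i) = ∑ i ∈ s, a i ^ 2 * Q (g i) := by
  induction s using Finset.cons_induction with
  | empty => simp
  | cons i s hi ih =>
    rw [Finset.sum_cons, Finset.sum_cons, ← ih]
    have hpol : polar Q (a i • g i) (∑ j ∈ s, a j • g j) = 0 := by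
      have h1 : (Q.polarBilin (a i • g i)) (∑ j ∈ s, a j • g j)
          = ∑ j ∈ s, (Q.polarBilin (a i • g i)) (a j • g j) := map_sum _ _ _
      simp only [polarBilin_apply_apply] at h1
      rw [h1]
      refine Finset.sum_eq_zero fun j hj => ?_
      rw [polar_smul_left, polar_smul_right, horth i j (fun hij => hi (hij ▸ hj))]
      simp
    have hadd : Q (a i • g i + ∑ j ∈ s, a j • g j)
        = Q (a i • g i) + Q (∑ j ∈ s, a j • g j) + polar Q (a i • g i) (∑ j ∈ s, a j • g j) := by
      rw [polar]; ring
    rw [hadd, hpol, QuadraticMap.map_smul, smul_eq_mul]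
    ring


/-- `Q` has signature `(p, q)`: there is an orthogonal basis with `p` vectors of
square `1` and `q` vectors of square `-1`. -/
def HasSignature {V : Type*} [AddCommGroup V] [Module ℝ V]
    (Q : QuadraticForm ℝ V) (p q : ℕ) : Prop :=
  ∃ b : Module.Basis (Fin p ⊕ Fin q) ℝ V,
    (∀ i j, i ≠ j → polar Q (b i) (b j) = 0) ∧
    (∀ i, Q (b (Sum.inl i)) = 1) ∧ (∀ j, Q (b (Sum.inr j)) = -1)

/-- **A negative vector is determined up to proportionality by the positive
`p`-planes orthogonal to it.**  Let `Q` be a nondegenerate quadratic form of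
signature `(p, q)`, `p, q ≥ 1`, on a finite-dimensional real vector space, and
let `x, y` have negative squares.  If every `p`-dimensional subspace on which
`Q` is positive definite and which is orthogonal to `x` is also orthogonal to
`y`, then `y` is a scalar multiple of `x`. -/
theorem negative_vector_determined_by_orthogonal_positive_planes
    {V : Type*} [AddCommGroup V] [Module ℝ V] [FiniteDimensional ℝ V]
    (p q : ℕ) (hp : 1 ≤ p) (hq : 1 ≤ q)
    (Q : QuadraticForm ℝ V) (hsig : HasSignature Q p q)
    (x y : V) (hx : Q x < 0) (hy : Q y < 0)
    (h : ∀ W : Submodule ℝ V, Module.finrank ℝ W = p →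
      (∀ w ∈ W, w ≠ 0 → 0 < Q w) →
      (∀ w ∈ W, polar Q w x = 0) → (∀ w ∈ W, polar Q w y = 0)) :
    ∃ c : ℝ, y = c • x := by
  classical
  obtain ⟨b, horth, hposb, hnegb⟩ := hsig
  have hQx : Q x ≠ 0 := ne_of_lt hx
  have h2Qx : (2 : ℝ) * Q x ≠ 0 := by nlinarith
  -- the orthogonal projection onto `x^⊥`
  set π : V →ₗ[ℝ] V :=
    LinearMap.id - (((2 * Q x)⁻¹) • ((LinearMap.flip Q.polarBilin) x)).smulRight x with hπdef
  have hπ : ∀ v, π v = v - ((2 * Q x)⁻¹ * polar Q v x) • x := by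
    intro v
    simp [hπdef, LinearMap.smulRight_apply, LinearMap.flip_apply, polarBilin_apply_apply,
      smul_smul, sub_eq_sub_iff_sub_eq_sub]
  have hpolxx : polar Q x x = 2 * Q x := by
    rw [polar_self]; push_cast [nsmul_eq_mul]; ring
  have hπx : ∀ v, polar Q (π v) x = 0 := by
    intro v
    rw [hπ, polar_sub_left, polar_smul_left, smul_eq_mul, hpolxx]
    field_simp
    ring
  have hQπ : ∀ v, Q v ≤ Q (π v) := by
    intro v
    rw [hπ]
    set c : ℝ := (2 * Q x)⁻¹ * polar Q v x with hc
    have hP : polar Q v x = c * (2 * Q x) := by rw [hc]; field_simp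
    have hexp : Q (v - c • x) = Q v + c ^ 2 * Q x - c * polar Q v x := by
      have h1 : Q (v + (-c) • x) = Q v + Q ((-c) • x) + polar Q v ((-c) • x) := by
        rw [polar]; ring
      have h2 : Q ((-c) • x) = c ^ 2 * Q x := by
        simp only [QuadraticMap.map_smul, smul_eq_mul]
        try ring
      have h3 : polar Q v ((-c) • x) = -c * polar Q v x := by
        rw [polar_smul_right, smul_eq_mul]
        try ring
      calc Q (v - c • x) = Q (v + (-c) • x) := by rw [neg_smul, sub_eq_add_neg]
        _ = Q v + c ^ 2 * Q x - c * polar Q v x := by rw [h1, h2, h3]; ring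
    rw [hexp, hP]
    nlinarith [sq_nonneg c]
  have hker : ∀ v, π v = 0 → Q v ≤ 0 := by
    intro v hv
    rw [hπ, sub_eq_zero] at hv
    rw [hv, QuadraticMap.map_smul, smul_eq_mul]
    nlinarith [sq_nonneg ((2 * Q x)⁻¹ * polar Q v x)]
  set i0 : Fin p := ⟨0, hp⟩ with hi0
  -- the key construction: tilted positive p-planes orthogonal to x
  have key : ∀ (j : Fin q) (t : ℝ), t ^ 2 < 1 → ∀ i : Fin p,
      polar Q (π (b (Sum.inl i) + (if i = i0 then t else 0) • b (Sum.inr j))) y = 0 := by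
    intro j t ht
    set g : Fin p → V :=
      fun i => b (Sum.inl i) + (if i = i0 then t else 0) • b (Sum.inr j) with hg
    have horthg : ∀ i i', i ≠ i' → polar Q (g i) (g i') = 0 := by
      intro i i' hne
      have hii' : (Sum.inl i : Fin p ⊕ Fin q) ≠ Sum.inl i' := by
        simpa using hne
      have e1 : polar Q (b (Sum.inl i)) (b (Sum.inl i')) = 0 := horth _ _ hii'
      have e2 : polar Q (b (Sum.inl i)) (b (Sum.inr j)) = 0 := horth _ _ (by simp)
      have e3 : polar Q (b (Sum.inr j)) (b (Sum.inl i')) = 0 := horth _ _ (by simp)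
      have hss : (if i = i0 then t else 0) * (if i' = i0 then t else 0) = 0 := by
        rcases eq_or_ne i i0 with h1 | h1
        · have h2 : i' ≠ i0 := fun hh => hne (by rw [h1, ← hh])
          simp [h2]
        · simp [h1]
      simp only [hg, polar_add_left, polar_add_right, polar_smul_left, polar_smul_right,
        smul_eq_mul, e1, e2, e3, mul_zero, zero_add, add_zero]
      linear_combination polar Q (b (Sum.inr j)) (b (Sum.inr j)) * hss
    have hQg : ∀ i, 1 - t ^ 2 ≤ Q (g i) := by
      intro i
      have hexp : Q (g i) = 1 - (if i = i0 then t else 0) ^ 2 := by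
        rw [hg]
        simp only []
        have h1 : Q (b (Sum.inl i) + (if i = i0 then t else 0) • b (Sum.inr j))
            = Q (b (Sum.inl i)) + Q ((if i = i0 then t else 0) • b (Sum.inr j))
              + polar Q (b (Sum.inl i)) ((if i = i0 then t else 0) • b (Sum.inr j)) := by
          rw [polar]; ring
        rw [h1, QuadraticMap.map_smul, polar_smul_right, horth (Sum.inl i) (Sum.inr j) (by simp),
          hposb, hnegb]
        simp only [smul_eq_mul]
        ring
      rw [hexp]
      rcases eq_or_ne i i0 with h1 | h1
      · rw [if_pos h1]
      · rw [if_neg h1]; nlinarith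
    have hposcomb : ∀ a : Fin p → ℝ, a ≠ 0 → 0 < Q (∑ i, a i • g i) := by
      intro a ha
      rw [quad_sum_orth Q Finset.univ g horthg a]
      obtain ⟨i, hi⟩ := Function.ne_iff.mp ha
      have ht0 : (0:ℝ) < 1 - t ^ 2 := by nlinarith
      refine Finset.sum_pos' (fun m _ => ?_) ⟨i, Finset.mem_univ i, ?_⟩
      · nlinarith [sq_nonneg (a m), hQg m, ht0]
      · have hi' : a i ≠ 0 := by simpa using hi
        have h2 : 0 < a i ^ 2 := by positivity
        nlinarith [hQg i, ht0, h2]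
    have hπsum : ∀ a : Fin p → ℝ, (∑ i, a i • π (g i)) = π (∑ i, a i • g i) := by
      intro a
      rw [map_sum]
      exact Finset.sum_congr rfl fun i _ => (map_smul π (a i) (g i)).symm
    have hlin : LinearIndependent ℝ (fun i => π (g i)) := by
      rw [Fintype.linearIndependent_iff]
      intro a ha i
      by_contra h0
      have hane : a ≠ 0 := fun hz => h0 (by rw [hz]; rfl)
      have h1 : π (∑ i, a i • g i) = 0 := by rw [← hπsum]; exact ha
      exact absurd (hker _ h1) (not_le.mpr (hposcomb a hane))
    set W : Submodule ℝ V := Submodule.span ℝ (Set.range fun i => π (g i)) with hW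
    have hrank : Module.finrank ℝ W = p := by
      rw [hW, finrank_span_eq_card hlin, Fintype.card_fin]
    have hrep : ∀ w ∈ W, ∃ a : Fin p → ℝ, w = π (∑ i, a i • g i) := by
      intro w hw
      obtain ⟨a, ha⟩ := Submodule.mem_span_range_iff_exists_fun ℝ |>.mp hw
      exact ⟨a, by rw [← ha, hπsum]⟩
    have hposdef : ∀ w ∈ W, w ≠ 0 → 0 < Q w := by
      intro w hw hw0
      obtain ⟨a, ha⟩ := hrep w hw
      rcases eq_or_ne a 0 with h1 | h1
      · exfalso; apply hw0; rw [ha, h1]; simp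
      · exact lt_of_lt_of_le (hposcomb a h1) (ha ▸ hQπ _)
    have hperp : ∀ w ∈ W, polar Q w x = 0 := by
      intro w hw
      obtain ⟨a, ha⟩ := hrep w hw
      rw [ha]; exact hπx _
    have hmain := h W hrank hposdef hperp
    intro i
    exact hmain _ (Submodule.subset_span (Set.mem_range_self i))
  set j0 : Fin q := ⟨0, hq⟩ with hj0
  have hey : ∀ i, polar Q (π (b (Sum.inl i))) y = 0 := by
    intro i
    have h1 := key j0 0 (by norm_num) i
    simpa using h1
  have hfy : ∀ j, polar Q (π (b (Sum.inr j))) y = 0 := by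
    intro j
    have h1 := key j (1/2) (by norm_num) i0
    rw [if_pos rfl, map_add, _root_.map_smul, polar_add_left, polar_smul_left, hey i0,
      smul_eq_mul] at h1
    linarith
  have hball : ∀ k, polar Q (π (b k)) y = 0 := by
    intro k
    cases k with
    | inl i => exact hey i
    | inr j => exact hfy j
  refine ⟨(2 * Q x)⁻¹ * polar Q x y, ?_⟩
  set lam : ℝ := (2 * Q x)⁻¹ * polar Q x y with hlam
  rw [← sub_eq_zero]
  set z : V := y - lam • x with hz
  have hzk : ∀ k, polar Q (b k) z = 0 := by
    intro k
    have h1 := hball k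
    rw [hπ, polar_sub_left, polar_smul_left, smul_eq_mul] at h1
    rw [hz, polar_sub_right, polar_smul_right, smul_eq_mul, hlam]
    linear_combination h1
  have hrz : ∀ k, b.repr z k = 0 := by
    intro k
    have h2 : polar Q (b k) z = b.repr z k * (2 * Q (b k)) := by
      conv_lhs => rw [← b.sum_repr z]
      have h3 : (Q.polarBilin (b k)) (∑ m, b.repr z m • b m)
          = ∑ m, (Q.polarBilin (b k)) (b.repr z m • b m) := map_sum _ _ _
      simp only [polarBilin_apply_apply] at h3
      rw [h3, Finset.sum_eq_single k]
      · rw [polar_smul_right, polar_self, smul_eq_mul, nsmul_eq_mul]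
        push_cast; ring
      · intro m _ hm
        rw [polar_smul_right, horth k m (Ne.symm hm), smul_zero]
      · intro hk; exact absurd (Finset.mem_univ k) hk
    rw [hzk k] at h2
    have hQbk : Q (b k) ≠ 0 := by
      cases k with
      | inl i => rw [hposb]; norm_num
      | inr j => rw [hnegb]; norm_num
    have : b.repr z k * (2 * Q (b k)) = 0 := h2.symm
    rcases mul_eq_zero.mp this with h4 | h4
    · exact h4
    · exfalso; apply hQbk; linarith [h4]
  have : b.repr z = 0 := Finsupp.ext hrz
  exact b.repr.map_eq_zero_iff.mp this
end

section
/- Let V be a finite-dimensional real vector space with a nondegenerate quadratic form Q of signature (p,m), where p ≥ 1 and m ≥ 0. Then the union of all p-dimensional subspaces of V on which Q is positive definite spans V as a vector space. -/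
open QuadraticMap

/-- `Q` of an orthogonal linear combination is the weighted sum of squares. -/
lemma quadratic_comb {V : Type*} [AddCommGroup V] [Module ℝ V]
    (Q : QuadraticForm ℝ V) {ι : Type*} [DecidableEq ι] (x : ι → V)
    (h : ∀ i j, i ≠ j → polar Q (x i) (x j) = 0) (a : ι → ℝ) (s : Finset ι) :
    Q (∑ i ∈ s, a i • x i) = ∑ i ∈ s, (a i) ^ 2 * Q (x i) := by
  induction s using Finset.cons_induction with
  | empty => simp
  | cons k s hk ih =>
    rw [Finset.sum_cons, Finset.sum_cons, QuadraticMap.map_add (⇑Q) (a k • x k) (∑ i ∈ s, a i • x i), ih]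
    have hpol : polar Q (a k • x k) (∑ i ∈ s, a i • x i) = 0 := by
      have : ∀ i ∈ s, polar Q (a k • x k) (a i • x i) = 0 := by
        intro i hi
        rw [polar_smul_left, polar_smul_right, h k i (by rintro rfl; exact hk hi)]
        simp
      calc polar Q (a k • x k) (∑ i ∈ s, a i • x i)
          = ∑ i ∈ s, polar Q (a k • x k) (a i • x i) := by
            rw [← polarBilin_apply_apply, map_sum]
            simp [polarBilin_apply_apply]
        _ = 0 := Finset.sum_eq_zero this
    rw [hpol, QuadraticMap.map_smul, smul_eq_mul]
    ring

/-- **The positive `p`-planes span the whole space.**  Let `Q` be a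
nondegenerate quadratic form of signature `(p, m)`, `p ≥ 1`, on a
finite-dimensional real vector space `V`.  Then the union of all
`p`-dimensional subspaces of `V` on which `Q` is positive definite spans `V`. -/
theorem positive_planes_span
    {V : Type*} [AddCommGroup V] [Module ℝ V] [FiniteDimensional ℝ V]
    (p m : ℕ) (hp : 1 ≤ p)
    (Q : QuadraticForm ℝ V) (hsig : HasSignature Q p m) :
    Submodule.span ℝ {v : V | ∃ W : Submodule ℝ V,
      Module.finrank ℝ W = p ∧ (∀ w ∈ W, w ≠ 0 → 0 < Q w) ∧ v ∈ W} = ⊤ := by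
  obtain ⟨b, horth, hpos, hneg⟩ := hsig
  set S : Set V := {v : V | ∃ W : Submodule ℝ V,
      Module.finrank ℝ W = p ∧ (∀ w ∈ W, w ≠ 0 → 0 < Q w) ∧ v ∈ W} with hS
  set i0 : Fin p := ⟨0, hp⟩
  -- the standard positive plane
  have hli0 : LinearIndependent ℝ (fun i : Fin p => b (Sum.inl i)) :=
    b.linearIndependent.comp Sum.inl Sum.inl_injective
  set W0 : Submodule ℝ V := Submodule.span ℝ (Set.range fun i : Fin p => b (Sum.inl i))
  have hW0rank : Module.finrank ℝ W0 = p := by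
    rw [finrank_span_eq_card hli0]; simp
  have hW0pos : ∀ w ∈ W0, w ≠ 0 → 0 < Q w := by
    intro w hw hwne
    obtain ⟨c, hc⟩ := (Submodule.mem_span_range_iff_exists_fun ℝ).mp hw
    have hQw : Q w = ∑ i : Fin p, (c i) ^ 2 * 1 := by
      rw [← hc, quadratic_comb Q _ (fun i j hij => horth _ _ (by simpa using hij)) c]
      exact Finset.sum_congr rfl fun i _ => by rw [hpos i]
    have hcne : ∃ i, c i ≠ 0 := by
      by_contra h
      push_neg at h
      apply hwne
      rw [← hc]
      simp [h]
    obtain ⟨i, hi⟩ := hcne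
    rw [hQw]
    apply Finset.sum_pos' (fun j _ => by positivity)
    exact ⟨i, Finset.mem_univ i, by positivity⟩
  have hW0mem : ∀ i : Fin p, b (Sum.inl i) ∈ Submodule.span ℝ S := by
    intro i
    apply Submodule.subset_span
    exact ⟨W0, hW0rank, hW0pos, Submodule.subset_span ⟨i, rfl⟩⟩
  -- tilted planes, one for each negative basis vector
  have hinr : ∀ j : Fin m, b (Sum.inr j) ∈ Submodule.span ℝ S := by
    intro j
    set v : Fin p → V := fun i =>
      if i = i0 then b (Sum.inl i) + (2⁻¹ : ℝ) • b (Sum.inr j) else b (Sum.inl i) with hv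
    -- expansion of combinations of `v` in the basis
    have hexp : ∀ c : Fin p → ℝ, ∑ i, c i • v i =
        (∑ i, c i • b (Sum.inl i)) + (c i0 * 2⁻¹) • b (Sum.inr j) := by
      intro c
      have : ∀ i : Fin p, c i • v i =
          c i • b (Sum.inl i) + (if i = i0 then (c i * 2⁻¹) • b (Sum.inr j) else 0) := by
        intro i
        by_cases hi : i = i0 <;> simp [hv, hi, smul_add, smul_smul]
      rw [Finset.sum_congr rfl fun i _ => this i, Finset.sum_add_distrib,
        Finset.sum_ite_eq' Finset.univ i0]
      simp
    have hrepr : ∀ c : Fin p → ℝ, ∑ i, c i • v i =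
        ∑ k : Fin p ⊕ Fin m, (Sum.elim c (fun j' => if j' = j then c i0 * 2⁻¹ else 0)) k • b k := by
      intro c
      rw [hexp c, Fintype.sum_sum_type]
      simp [Finset.sum_ite_eq' Finset.univ j]
    -- linear independence of `v`
    have hli : LinearIndependent ℝ v := by
      rw [Fintype.linearIndependent_iff]
      intro c hc
      have := hrepr c
      rw [hc] at this
      have hall := Fintype.linearIndependent_iff.mp b.linearIndependent _ this.symm
      intro i
      simpa using hall (Sum.inl i)
    set W : Submodule ℝ V := Submodule.span ℝ (Set.range v)
    have hWrank : Module.finrank ℝ W = p := by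
      rw [finrank_span_eq_card hli]; simp
    have hWpos : ∀ w ∈ W, w ≠ 0 → 0 < Q w := by
      intro w hw hwne
      obtain ⟨c, hc⟩ := (Submodule.mem_span_range_iff_exists_fun ℝ).mp hw
      set a : Fin p ⊕ Fin m → ℝ := Sum.elim c (fun j' => if j' = j then c i0 * 2⁻¹ else 0) with ha
      have hQw : Q w = ∑ k : Fin p ⊕ Fin m, (a k) ^ 2 * Q (b k) := by
        rw [← hc, hrepr c]
        exact quadratic_comb Q b horth a Finset.univ
      have hQw2 : Q w = (∑ i : Fin p, (c i) ^ 2) - (c i0 * 2⁻¹) ^ 2 := by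
        rw [hQw, Fintype.sum_sum_type]
        have h1 : ∑ i : Fin p, (a (Sum.inl i)) ^ 2 * Q (b (Sum.inl i))
            = ∑ i : Fin p, (c i) ^ 2 := by
          exact Finset.sum_congr rfl fun i _ => by rw [hpos i]; simp [ha]
        have h2 : ∑ j' : Fin m, (a (Sum.inr j')) ^ 2 * Q (b (Sum.inr j'))
            = -(c i0 * 2⁻¹) ^ 2 := by
          have : ∀ j' : Fin m, (a (Sum.inr j')) ^ 2 * Q (b (Sum.inr j'))
              = if j' = j then -(c i0 * 2⁻¹) ^ 2 else 0 := by
            intro j'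
            rcases eq_or_ne j' j with hj' | hj'
            · subst hj'
              simp only [ha, Sum.elim_inr, if_pos rfl, hneg]
              norm_num
            · simp [ha, hj']
          rw [Finset.sum_congr rfl fun j' _ => this j', Finset.sum_ite_eq' Finset.univ j]
          simp
        rw [h1, h2]
        ring
      have hcne : ∃ i, c i ≠ 0 := by
        by_contra h
        push_neg at h
        apply hwne
        rw [← hc]
        simp [h]
      obtain ⟨i, hi⟩ := hcne
      have key : Q w = ∑ i : Fin p, (if i = i0 then (3/4 : ℝ) else 1) * (c i) ^ 2 := by
        rw [hQw2]
        rw [← Finset.add_sum_erase Finset.univ _ (Finset.mem_univ i0),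
          ← Finset.add_sum_erase Finset.univ
            (fun i => (if i = i0 then (3/4 : ℝ) else 1) * (c i) ^ 2) (Finset.mem_univ i0)]
        have : ∑ x ∈ Finset.univ.erase i0, (if x = i0 then (3/4 : ℝ) else 1) * (c x) ^ 2
            = ∑ x ∈ Finset.univ.erase i0, (c x) ^ 2 := by
          apply Finset.sum_congr rfl
          intro x hx
          rw [if_neg (Finset.mem_erase.mp hx).1]
          ring
        rw [this, if_pos rfl]
        ring
      rw [key]
      apply Finset.sum_pos' (fun k _ => by positivity)
      refine ⟨i, Finset.mem_univ i, ?_⟩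
      rcases eq_or_ne i i0 with hii | hii
      · subst hii
        simp only [if_pos rfl]
        positivity
      · simp only [if_neg hii, one_mul]
        positivity
    have hvW : v i0 ∈ Submodule.span ℝ S :=
      Submodule.subset_span ⟨W, hWrank, hWpos, Submodule.subset_span ⟨i0, rfl⟩⟩
    have hvi0 : v i0 = b (Sum.inl i0) + (2⁻¹ : ℝ) • b (Sum.inr j) := by simp [hv]
    have : b (Sum.inr j) = (2 : ℝ) • (v i0 - b (Sum.inl i0)) := by
      rw [hvi0]; rw [add_sub_cancel_left, smul_smul]; norm_num
    rw [this]
    exact Submodule.smul_mem _ _ (Submodule.sub_mem _ hvW (hW0mem i0))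
  -- conclude
  rw [eq_top_iff, ← b.span_eq]
  apply Submodule.span_le.mpr
  rintro x ⟨k, rfl⟩
  cases k with
  | inl i => exact hW0mem i
  | inr j => exact hinr j
end
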